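/- arXiv:1708.09458 — 2 statements merged into one kernel-verified Lean document; each statement's English description precedes it below -/
import Mathlib

section
/- Let f₀'' ∈ L_1(ℝ) and fix an angle Φ with sin Φ ≠ 0. Define I(ρ) = 2ρ ∫_ℝ f₀''(ρ cos Φ − vρ sin Φ) · (ρ cos ω − vρ sin ω)²/(ρ² + (vρ)²) · (1/ρ) dv in the equivalent form I(ρ) = 2 ∫_ℝ f₀''(ρ cos Φ − x sin Φ) · (ρ cos ω − x sin ω)²/(ρ² + x²) dx for a fixed angle ω. If additionally ∫_ℝ f₀''(x) dx = 0 (e.g. f₀' vanishes at ±∞, which holds when f₀ ∈ W¹₂(ℝ) with f₀'' ∈ L¹), then lim_{ρ → 0⁺} I(ρ) = 0. -/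
open MeasureTheory Real Filter Topology

/-- Vanishing of the second-derivative term: if `g ∈ L_1(ℝ)` with `∫ g = 0` and
`sin Φ ≠ 0`, then `I(ρ) = 2 ∫ g(ρ cos Φ − x sin Φ)(ρ cos ω − x sin ω)²/(ρ²+x²) dx → 0`
as `ρ → 0⁺`. -/
theorem second_derivative_term_vanishes (g : ℝ → ℝ) (hg : MeasureTheory.Integrable g)
    (hg0 : (∫ x : ℝ, g x) = 0) (Φ ω : ℝ) (hΦ : Real.sin Φ ≠ 0) :
    Filter.Tendsto
      (fun ρ : ℝ => 2 * ∫ x : ℝ,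
        g (ρ * Real.cos Φ - x * Real.sin Φ) *
          ((ρ * Real.cos ω - x * Real.sin ω) ^ 2 / (ρ ^ 2 + x ^ 2)))
      (𝓝[>] (0 : ℝ)) (𝓝 0) := by
  set s := Real.sin Φ with hs
  set F : ℝ → ℝ → ℝ := fun ρ u => g u *
      ((ρ * Real.cos ω - ((ρ * Real.cos Φ - u) / s) * Real.sin ω) ^ 2 /
        (ρ ^ 2 + ((ρ * Real.cos Φ - u) / s) ^ 2)) with hFdef
  -- change of variables
  have key : ∀ ρ : ℝ, (∫ x : ℝ, g (ρ * Real.cos Φ - x * s) *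
        ((ρ * Real.cos ω - x * Real.sin ω) ^ 2 / (ρ ^ 2 + x ^ 2)))
      = |s|⁻¹ * ∫ u, F ρ u := by
    intro ρ
    have h1 : ∀ x : ℝ, g (ρ * Real.cos Φ - x * s) *
        ((ρ * Real.cos ω - x * Real.sin ω) ^ 2 / (ρ ^ 2 + x ^ 2))
        = (fun y => F ρ (y + ρ * Real.cos Φ)) ((-s) * x) := by
      intro x
      have hx : (ρ * Real.cos Φ - (-s * x + ρ * Real.cos Φ)) / s = x := by
        field_simp
        ring
      simp only [hFdef, hx]
      ring_nf
    simp_rw [h1]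
    rw [MeasureTheory.Measure.integral_comp_mul_left (fun y => F ρ (y + ρ * Real.cos Φ)) (-s)]
    rw [MeasureTheory.integral_add_right_eq_self (fun y => F ρ y) (ρ * Real.cos Φ)]
    rw [abs_inv, abs_neg, smul_eq_mul]
  simp only [key]
  -- it suffices that the inner integral tends to 0
  have main : Tendsto (fun ρ : ℝ => ∫ u, F ρ u) (𝓝[>] (0:ℝ))
      (𝓝 (∫ u, g u * Real.sin ω ^ 2)) := by
    apply MeasureTheory.tendsto_integral_filter_of_dominated_convergence
      (fun u => |g u| * 2)
    · -- a.e. strong measurability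
      filter_upwards with ρ
      apply hg.aestronglyMeasurable.mul
      apply Measurable.aestronglyMeasurable
      apply Measurable.div <;> fun_prop
    · -- bound
      filter_upwards [self_mem_nhdsWithin] with ρ (hρ : 0 < ρ)
      filter_upwards with u
      simp only [hFdef]
      rw [Real.norm_eq_abs, abs_mul]
      gcongr
      set x := (ρ * Real.cos Φ - u) / s
      have hden : 0 < ρ ^ 2 + x ^ 2 := by positivity
      rw [abs_div, abs_of_nonneg (sq_nonneg _), abs_of_pos hden, div_le_iff₀ hden]
      have h1 : (ρ * Real.cos ω - x * Real.sin ω) ^ 2 ≤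
          2 * ((ρ * Real.cos ω)^2 + (x * Real.sin ω)^2) := by nlinarith [sq_nonneg (ρ * Real.cos ω + x * Real.sin ω)]
      have h2 : (ρ * Real.cos ω)^2 ≤ ρ ^ 2 := by
        rw [mul_pow]; nlinarith [Real.cos_sq_le_one ω, sq_nonneg ρ]
      have h3 : (x * Real.sin ω)^2 ≤ x ^ 2 := by
        rw [mul_pow]; nlinarith [Real.sin_sq_le_one ω, sq_nonneg x]
      nlinarith
    · exact (hg.abs.mul_const 2)
    · -- a.e. pointwise convergence
      have : ∀ᵐ u : ℝ, u ≠ 0 := by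
        rw [MeasureTheory.ae_iff]
        simpa using MeasureTheory.measure_singleton (0:ℝ)
      filter_upwards [this] with u hu
      have hx0 : (-u) / s ≠ 0 := div_ne_zero (neg_ne_zero.mpr hu) hΦ
      have hcont : ContinuousAt (fun ρ : ℝ =>
          (ρ * Real.cos ω - ((ρ * Real.cos Φ - u) / s) * Real.sin ω) ^ 2 /
            (ρ ^ 2 + ((ρ * Real.cos Φ - u) / s) ^ 2)) 0 := by
        apply ContinuousAt.div
        · fun_prop
        · fun_prop
        · simp only [zero_mul, zero_sub]
          positivity
      have hval : ((0:ℝ) * Real.cos ω - ((0 * Real.cos Φ - u) / s) * Real.sin ω) ^ 2 /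
            ((0:ℝ) ^ 2 + ((0 * Real.cos Φ - u) / s) ^ 2) = Real.sin ω ^ 2 := by
        have h0 : ((0:ℝ) * Real.cos Φ - u) / s = (-u)/s := by ring_nf
        rw [h0]
        have : ((-u)/s)^2 ≠ 0 := pow_ne_zero _ hx0
        field_simp
        ring
      have := hcont.tendsto
      rw [hval] at this
      exact (Tendsto.const_mul (g u) this).mono_left nhdsWithin_le_nhds
  rw [show (∫ u, g u * Real.sin ω ^ 2) = 0 by rw [integral_mul_const, hg0, zero_mul]] at main
  have := (main.const_mul (2 * |s|⁻¹))
  simp only [mul_zero] at this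
  convert this using 2 with ρ
  ring
end

section
/- Suppose f₀ ∈ L_p(ℝ) for some p > 2 with conjugate exponent q < 2. Then the double integral ∫_{π/2}^{2π} ∫_0^1 ρ² · (∫_ℝ |f₀(w)| · |ρ sin Φ_θ| / ((w − ρ cos Φ_θ)² + (ρ sin Φ_θ)²) dw)² dρ dθ is finite, where Φ_θ = (2/3)(π + θ). -/
open MeasureTheory Real Set
open scoped ENNReal NNReal

lemma lintegral_comp_affine {f : ℝ → ℝ≥0∞} (hf : Measurable f) {c : ℝ} (hc : c ≠ 0) (d : ℝ) :
    ∫⁻ y, f y = ENNReal.ofReal |c| * ∫⁻ x, f (c * x + d) := by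
  have h1 : ∫⁻ y, f (y + d) ∂(Measure.map (c * ·) volume) = ∫⁻ x, f (c * x + d) :=
    lintegral_map (hf.comp (measurable_add_const d)) (measurable_const_mul c)
  have h2 : ∫⁻ y, f (y + d) ∂(volume : Measure ℝ) = ∫⁻ y, f y := by
    conv_rhs => rw [← map_add_right_eq_self (volume : Measure ℝ) d]
    rw [lintegral_map hf (measurable_add_const d)]
  rw [← h1, Real.map_volume_mul_left hc, lintegral_smul_measure, h2, smul_eq_mul, ← mul_assoc,
    ← ENNReal.ofReal_mul (abs_nonneg c), ← abs_mul, mul_inv_cancel₀ hc, abs_one,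
    ENNReal.ofReal_one, one_mul]

lemma kernel_lq {q : ℝ} (hq : 0 ≤ q) {b : ℝ} (hb : b ≠ 0) (a : ℝ) :
    ∫⁻ w : ℝ, (ENNReal.ofReal (|b| / ((w - a) ^ 2 + b ^ 2))) ^ q
      = ENNReal.ofReal (|b| ^ (1 - q)) *
        ∫⁻ u : ℝ, (ENNReal.ofReal ((1 + u ^ 2)⁻¹)) ^ q := by
  have hb' : (0:ℝ) < |b| := abs_pos.2 hb
  have hden : ∀ w : ℝ, (0:ℝ) < (w - a) ^ 2 + b ^ 2 := fun w => by positivity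
  have hcont : Continuous fun w : ℝ => |b| / ((w - a) ^ 2 + b ^ 2) :=
    continuous_const.div (by continuity) (fun w => (hden w).ne')
  have hmeas : Measurable fun w : ℝ =>
      (ENNReal.ofReal (|b| / ((w - a) ^ 2 + b ^ 2))) ^ q :=
    (hcont.measurable.ennreal_ofReal).pow measurable_const
  rw [lintegral_comp_affine hmeas hb'.ne' a]
  have key : ∀ x : ℝ, |b| / ((|b| * x + a - a) ^ 2 + b ^ 2) = |b|⁻¹ * (1 + x ^ 2)⁻¹ := by
    intro x
    have : (|b| * x + a - a) ^ 2 + b ^ 2 = b ^ 2 * (1 + x ^ 2) := by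
      rw [add_sub_cancel_right, mul_pow, sq_abs]; ring
    rw [this]
    rw [← sq_abs b]
    field_simp
  simp only [key]
  have step : ∀ x : ℝ, (ENNReal.ofReal (|b|⁻¹ * (1 + x ^ 2)⁻¹)) ^ q
      = ENNReal.ofReal (|b|⁻¹ ^ q) * (ENNReal.ofReal ((1 + x ^ 2)⁻¹)) ^ q := by
    intro x
    rw [ENNReal.ofReal_mul (by positivity), ENNReal.mul_rpow_of_nonneg _ _ hq,
      ← ENNReal.ofReal_rpow_of_pos (by positivity)]
  simp only [step]
  rw [lintegral_const_mul' _ _ ENNReal.ofReal_ne_top, ← mul_assoc, abs_abs,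
    ← ENNReal.ofReal_mul (abs_nonneg b)]
  congr 2
  rw [Real.inv_rpow (abs_nonneg b), Real.rpow_sub hb', Real.rpow_one, div_eq_mul_inv]

lemma pointwise_bound {p q : ℝ} (hpq : p.HolderConjugate q) (f₀ : ℝ → ℝ)
    (hm : AEMeasurable f₀ volume) (θ : ℝ) {ρ : ℝ} (hρ : ρ ∈ Set.Ioc (0:ℝ) 1) :
    ENNReal.ofReal (ρ ^ 2 *
        (∫ w : ℝ, |f₀ w| * |ρ * Real.sin ((2 / 3) * (Real.pi + θ))| /
          ((w - ρ * Real.cos ((2 / 3) * (Real.pi + θ))) ^ 2 +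
            (ρ * Real.sin ((2 / 3) * (Real.pi + θ))) ^ 2)) ^ 2)
      ≤ ((∫⁻ w : ℝ, (ENNReal.ofReal |f₀ w|) ^ p) ^ (1 / p)) ^ 2 *
        (∫⁻ u : ℝ, (ENNReal.ofReal ((1 + u ^ 2)⁻¹)) ^ q) ^ (2 / q) *
        ENNReal.ofReal (|Real.sin ((2 / 3) * (Real.pi + θ))| ^ (2 / q - 2)) := by
  obtain ⟨hρ0, hρ1⟩ := hρ
  set s := Real.sin ((2 / 3) * (Real.pi + θ)) with hs_def
  set c := Real.cos ((2 / 3) * (Real.pi + θ)) with hc_def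
  by_cases hs : s = 0
  · simp only [hs, mul_zero, abs_zero, zero_div, mul_zero, integral_zero, ne_eq,
      OfNat.ofNat_ne_zero, not_false_eq_true, zero_pow, ENNReal.ofReal_zero]
    exact zero_le
  -- main case
  have hq0 : 0 < q := hpq.symm.pos
  have hq1 : 1 < q := hpq.symm.lt
  have hb : ρ * s ≠ 0 := mul_ne_zero hρ0.ne' hs
  have hbabs : (0:ℝ) < |ρ * s| := abs_pos.2 hb
  set a := ρ * c with ha_def
  set b := ρ * s with hb_def
  set g : ℝ → ℝ := fun w => |f₀ w| * |b| / ((w - a) ^ 2 + b ^ 2) with hg_def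
  have hden : ∀ w : ℝ, (0:ℝ) < (w - a) ^ 2 + b ^ 2 := fun w => by positivity
  have hg_nonneg : ∀ w, 0 ≤ g w := fun w =>
    div_nonneg (mul_nonneg (abs_nonneg _) (abs_nonneg _)) (hden w).le
  set F : ℝ → ℝ≥0∞ := fun w => ENNReal.ofReal |f₀ w| with hF_def
  set G : ℝ → ℝ≥0∞ := fun w => ENNReal.ofReal (|b| / ((w - a) ^ 2 + b ^ 2)) with hG_def
  have hofg : ∀ w, ENNReal.ofReal (g w) = F w * G w := by
    intro w
    rw [hg_def, hF_def, hG_def]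
    simp only
    rw [mul_div_assoc, ENNReal.ofReal_mul (abs_nonneg _)]
  have hF : AEMeasurable F volume := (continuous_abs.measurable.comp_aemeasurable hm).ennreal_ofReal
  have hG : AEMeasurable G volume := by
    have hcont : Continuous fun w : ℝ => |b| / ((w - a) ^ 2 + b ^ 2) :=
      continuous_const.div (by continuity) (fun w => (hden w).ne')
    exact hcont.measurable.ennreal_ofReal.aemeasurable
  -- Step 1 : ofReal of Bochner integral ≤ lintegral
  have step1 : ENNReal.ofReal (∫ w, g w) ≤ ∫⁻ w, F w * G w := by
    by_cases hInt : Integrable g volume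
    · rw [ofReal_integral_eq_lintegral_ofReal hInt (ae_of_all _ hg_nonneg)]
      exact le_of_eq (lintegral_congr hofg)
    · rw [integral_undef hInt]
      simp
  -- Step 2 : Hölder
  have step2 : ∫⁻ w, F w * G w
      ≤ (∫⁻ w, F w ^ p) ^ (1 / p) * (∫⁻ w, G w ^ q) ^ (1 / q) :=
    ENNReal.lintegral_mul_le_Lp_mul_Lq volume hpq hF hG
  -- Step 3 : kernel computation
  have step3 : ∫⁻ w, G w ^ q
      = ENNReal.ofReal (|b| ^ (1 - q)) * ∫⁻ u : ℝ, (ENNReal.ofReal ((1 + u ^ 2)⁻¹)) ^ q :=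
    kernel_lq hq0.le hb a
  set A : ℝ≥0∞ := (∫⁻ w : ℝ, (ENNReal.ofReal |f₀ w|) ^ p) ^ (1 / p) with hA_def
  set Cq : ℝ≥0∞ := ∫⁻ u : ℝ, (ENNReal.ofReal ((1 + u ^ 2)⁻¹)) ^ q with hCq_def
  have hZ : ((ENNReal.ofReal (|b| ^ (1 - q)) * Cq) ^ (1 / q)) ^ 2
      = ENNReal.ofReal (|b| ^ (2 / q - 2)) * Cq ^ (2 / q) := by
    rw [← ENNReal.rpow_natCast _ 2, ← ENNReal.rpow_mul]
    have : 1 / q * ((2:ℕ):ℝ) = 2 / q := by push_cast; ring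
    rw [this, ENNReal.mul_rpow_of_nonneg _ _ (by positivity),
      ENNReal.ofReal_rpow_of_pos (Real.rpow_pos_of_pos hbabs _),
      ← Real.rpow_mul (abs_nonneg b)]
    have : (1 - q) * (2 / q) = 2 / q - 2 := by field_simp
    rw [this]
  have hreal : ρ ^ 2 * |b| ^ (2 / q - 2) ≤ |s| ^ (2 / q - 2) := by
    have habsb : |b| = ρ * |s| := by
      rw [hb_def, abs_mul, abs_of_pos hρ0]
    rw [habsb, Real.mul_rpow hρ0.le (abs_nonneg s), ← mul_assoc]
    have hρ2 : ρ ^ 2 * ρ ^ (2 / q - 2) = ρ ^ (2 / q) := by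
      rw [← Real.rpow_natCast ρ 2, ← Real.rpow_add hρ0]
      norm_num
    rw [hρ2]
    have h1 : ρ ^ (2 / q) ≤ 1 := Real.rpow_le_one hρ0.le hρ1 (by positivity)
    nlinarith [Real.rpow_nonneg (abs_nonneg s) (2 / q - 2), Real.rpow_nonneg hρ0.le (2 / q)]
  have hint_nonneg : 0 ≤ ∫ w, g w := integral_nonneg hg_nonneg
  calc ENNReal.ofReal (ρ ^ 2 * (∫ w, g w) ^ 2)
      = ENNReal.ofReal (ρ ^ 2) * (ENNReal.ofReal (∫ w, g w)) ^ 2 := by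
        rw [ENNReal.ofReal_mul (sq_nonneg ρ), ENNReal.ofReal_pow hint_nonneg]
    _ ≤ ENNReal.ofReal (ρ ^ 2) *
          (A * ((ENNReal.ofReal (|b| ^ (1 - q)) * Cq) ^ (1 / q))) ^ 2 := by
        gcongr
        exact step1.trans (step2.trans_eq (by rw [step3]))
    _ = A ^ 2 * Cq ^ (2 / q) *
          (ENNReal.ofReal (ρ ^ 2) * ENNReal.ofReal (|b| ^ (2 / q - 2))) := by
        rw [mul_pow, hZ]; ring
    _ ≤ A ^ 2 * Cq ^ (2 / q) * ENNReal.ofReal (|s| ^ (2 / q - 2)) := by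
        gcongr
        rw [← ENNReal.ofReal_mul (sq_nonneg ρ)]
        exact ENNReal.ofReal_le_ofReal hreal
lemma jordan_min {x : ℝ} (h0 : 0 ≤ x) (hπ : x ≤ π) :
    2 / π * min x (π - x) ≤ Real.sin x := by
  rcases le_total x (π / 2) with h | h
  · have hmin : min x (π - x) = x := min_eq_left (by linarith)
    rw [hmin]
    exact Real.mul_le_sin h0 h
  · have hmin : min x (π - x) = π - x := min_eq_right (by linarith)
    rw [hmin, ← Real.sin_pi_sub]
    exact Real.mul_le_sin (by linarith) (by linarith)

lemma sin_lower {θ : ℝ} (h1 : π / 2 ≤ θ) (h2 : θ ≤ 2 * π) :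
    4 / (3 * π) * min (θ - π / 2) (2 * π - θ) ≤ |Real.sin (2 / 3 * (π + θ))| := by
  have hπ := Real.pi_pos
  set x := 2 / 3 * (θ - π / 2) with hx
  have hx0 : 0 ≤ x := by rw [hx]; nlinarith
  have hxπ : x ≤ π := by rw [hx]; nlinarith
  have hΦ : 2 / 3 * (π + θ) = π + x := by rw [hx]; ring
  have habs : |Real.sin (2 / 3 * (π + θ))| = Real.sin x := by
    rw [hΦ, add_comm, Real.sin_add_pi, abs_neg,
      abs_of_nonneg (Real.sin_nonneg_of_nonneg_of_le_pi hx0 hxπ)]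
  rw [habs]
  have hmin : min x (π - x) = 2 / 3 * min (θ - π / 2) (2 * π - θ) := by
    have hπx : π - x = 2 / 3 * (2 * π - θ) := by rw [hx]; ring
    rw [hx, hπx, ← mul_min_of_nonneg _ _ (by norm_num : (0:ℝ) ≤ 2/3)]
  have := jordan_min hx0 hxπ
  rw [hmin] at this
  calc 4 / (3 * π) * min (θ - π / 2) (2 * π - θ)
      = 2 / π * (2 / 3 * min (θ - π / 2) (2 * π - θ)) := by field_simp; ring
    _ ≤ Real.sin x := this

lemma sin_rpow_bound {e θ : ℝ} (he0 : e < 0) (h1 : π / 2 < θ) (h2 : θ ≤ 2 * π) :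
    |Real.sin (2 / 3 * (π + θ))| ^ e
      ≤ (4 / (3 * π)) ^ e * ((θ - π / 2) ^ e + (2 * π - θ) ^ e) := by
  have hπ := Real.pi_pos
  have hk : (0:ℝ) < 4 / (3 * π) := by positivity
  rcases eq_or_lt_of_le h2 with rfl | h2'
  · have : (2:ℝ) / 3 * (π + 2 * π) = 2 * π := by ring
    rw [this, Real.sin_two_pi, abs_zero, Real.zero_rpow he0.ne]
    have ha : (0:ℝ) ≤ (2 * π - π / 2) ^ e := Real.rpow_nonneg (by linarith) _
    have hb : (0:ℝ) ≤ (2 * π - 2 * π) ^ e := Real.rpow_nonneg (by linarith) _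
    positivity
  · have hm : (0:ℝ) < min (θ - π / 2) (2 * π - θ) := lt_min (by linarith) (by linarith)
    have hstep : |Real.sin (2 / 3 * (π + θ))| ^ e
        ≤ (4 / (3 * π) * min (θ - π / 2) (2 * π - θ)) ^ e :=
      Real.rpow_le_rpow_of_nonpos (by positivity) (sin_lower h1.le h2) he0.le
    refine hstep.trans ?_
    rw [Real.mul_rpow hk.le hm.le]
    apply mul_le_mul_of_nonneg_left _ (Real.rpow_nonneg hk.le e)
    rcases min_cases (θ - π / 2) (2 * π - θ) with ⟨hmeq, _⟩ | ⟨hmeq, _⟩ <;> rw [hmeq]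
    · exact le_add_of_nonneg_right (Real.rpow_nonneg (by linarith) _)
    · exact le_add_of_nonneg_left (Real.rpow_nonneg (by linarith) _)

lemma theta_integrable {e : ℝ} (he : -1 < e) :
    IntegrableOn (fun θ : ℝ => (θ - π / 2) ^ e + (2 * π - θ) ^ e)
      (Set.Ioc (π / 2) (2 * π)) volume := by
  have hπ := Real.pi_pos
  have hle : π / 2 ≤ 2 * π := by linarith
  have I1 : IntervalIntegrable (fun x : ℝ => (x - π / 2) ^ e) volume (π / 2) (2 * π) := by
    have h := (intervalIntegral.intervalIntegrable_rpow' (a := 0) (b := 3 * π / 2)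
      he).comp_sub_right (π / 2)
    have e1 : 0 + π / 2 = π / 2 := by ring
    have e2 : 3 * π / 2 + π / 2 = 2 * π := by ring
    rwa [e1, e2] at h
  have I2 : IntervalIntegrable (fun x : ℝ => (2 * π - x) ^ e) volume (π / 2) (2 * π) := by
    have h := ((intervalIntegral.intervalIntegrable_rpow' (a := 0) (b := 3 * π / 2)
      he).comp_sub_left (2 * π)).symm
    have e1 : 2 * π - 0 = 2 * π := by ring
    have e2 : 2 * π - 3 * π / 2 = π / 2 := by ring
    rwa [e1, e2] at h
  have := (I1.add I2)
  rw [intervalIntegrable_iff_integrableOn_Ioc_of_le hle] at this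
  exact this
lemma Cq_lt_top {q : ℝ} (hq : 1 ≤ q) :
    ∫⁻ u : ℝ, (ENNReal.ofReal ((1 + u ^ 2)⁻¹)) ^ q < ⊤ := by
  have hle : ∀ u : ℝ, (ENNReal.ofReal ((1 + u ^ 2)⁻¹)) ^ q
      ≤ ENNReal.ofReal ((1 + u ^ 2)⁻¹) := by
    intro u
    have h1 : ENNReal.ofReal ((1 + u ^ 2)⁻¹) ≤ 1 := by
      rw [← ENNReal.ofReal_one]
      apply ENNReal.ofReal_le_ofReal
      rw [inv_le_one_iff₀]
      right; nlinarith [sq_nonneg u]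
    calc (ENNReal.ofReal ((1 + u ^ 2)⁻¹)) ^ q
        ≤ (ENNReal.ofReal ((1 + u ^ 2)⁻¹)) ^ (1:ℝ) :=
          ENNReal.rpow_le_rpow_of_exponent_ge h1 hq
      _ = _ := ENNReal.rpow_one _
  calc ∫⁻ u : ℝ, (ENNReal.ofReal ((1 + u ^ 2)⁻¹)) ^ q
      ≤ ∫⁻ u : ℝ, ENNReal.ofReal ((1 + u ^ 2)⁻¹) := lintegral_mono hle
    _ < ⊤ := integrable_inv_one_add_sq.lintegral_lt_top

/-- `L₂`-estimate in polar coordinates: if `f₀ ∈ L_p(ℝ)` with `p > 2` and conjugate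
exponent `q = p/(p-1) < 2`, then
`∫_{π/2}^{2π} ∫_0^1 ρ² (∫ |f₀(w)| |ρ sin Φ_θ| / ((w − ρ cos Φ_θ)² + (ρ sin Φ_θ)²) dw)² dρ dθ`
is finite, where `Φ_θ = (2/3)(π + θ)`. -/
theorem l2_polar_estimate (p : ℝ) (hp : 2 < p) (f₀ : ℝ → ℝ)
    (hf₀ : MeasureTheory.MemLp f₀ (ENNReal.ofReal p)) :
    (∫⁻ θ in Set.Ioc (Real.pi / 2) (2 * Real.pi),
      ∫⁻ ρ in Set.Ioc (0 : ℝ) 1,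
        ENNReal.ofReal (ρ ^ 2 *
          (∫ w : ℝ, |f₀ w| * |ρ * Real.sin ((2 / 3) * (Real.pi + θ))| /
            ((w - ρ * Real.cos ((2 / 3) * (Real.pi + θ))) ^ 2 +
              (ρ * Real.sin ((2 / 3) * (Real.pi + θ))) ^ 2)) ^ 2)) < ⊤ := by
  have hπ := Real.pi_pos
  have hp1 : 1 < p := by linarith
  have hpq : p.HolderConjugate (p / (p - 1)) := Real.HolderConjugate.conjExponent hp1
  set q : ℝ := p / (p - 1) with hq_def
  have hq0 : 0 < q := hpq.symm.pos
  have hq1 : 1 < q := hpq.symm.lt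
  have hq2 : q < 2 := by
    rw [hq_def, div_lt_iff₀ (by linarith : (0:ℝ) < p - 1)]
    linarith
  set e : ℝ := 2 / q - 2 with he_def
  have he1 : -1 < e := by
    have : 1 < 2 / q := (one_lt_div hq0).mpr hq2
    rw [he_def]; linarith
  have he0 : e < 0 := by
    have : 2 / q < 2 := by rw [div_lt_iff₀ hq0]; nlinarith
    rw [he_def]; linarith
  have hm : AEMeasurable f₀ volume := hf₀.1.aemeasurable
  -- finiteness of the constants
  set A : ℝ≥0∞ := (∫⁻ w : ℝ, (ENNReal.ofReal |f₀ w|) ^ p) ^ (1 / p) with hA_def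
  set Cq : ℝ≥0∞ := ∫⁻ u : ℝ, (ENNReal.ofReal ((1 + u ^ 2)⁻¹)) ^ q with hCq_def
  have hA : A ≠ ⊤ := by
    have h0 : (ENNReal.ofReal p) ≠ 0 := by
      rw [ne_eq, ENNReal.ofReal_eq_zero]; push_neg; linarith
    have hfin := lintegral_rpow_enorm_lt_top_of_eLpNorm_lt_top h0 ENNReal.ofReal_ne_top hf₀.2
    rw [ENNReal.toReal_ofReal (by linarith : (0:ℝ) ≤ p)] at hfin
    have heq : ∀ w : ℝ, ((‖f₀ w‖ₑ : ℝ≥0∞)) ^ p = (ENNReal.ofReal |f₀ w|) ^ p := fun w => by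
      rw [Real.enorm_eq_ofReal_abs]
    rw [hA_def]
    apply ENNReal.rpow_ne_top_of_nonneg (by positivity)
    rw [← lintegral_congr heq]
    exact hfin.ne
  have hCq : Cq ≠ ⊤ := (Cq_lt_top hq1.le).ne
  set D : ℝ≥0∞ := A ^ 2 * Cq ^ (2 / q) with hD_def
  have hD : D ≠ ⊤ := by
    rw [hD_def]
    exact ENNReal.mul_ne_top (ENNReal.pow_ne_top hA)
      (ENNReal.rpow_ne_top_of_nonneg (by positivity) hCq)
  set κ : ℝ := (4 / (3 * π)) ^ e with hκ_def
  calc (∫⁻ θ in Set.Ioc (Real.pi / 2) (2 * Real.pi),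
      ∫⁻ ρ in Set.Ioc (0 : ℝ) 1,
        ENNReal.ofReal (ρ ^ 2 *
          (∫ w : ℝ, |f₀ w| * |ρ * Real.sin ((2 / 3) * (Real.pi + θ))| /
            ((w - ρ * Real.cos ((2 / 3) * (Real.pi + θ))) ^ 2 +
              (ρ * Real.sin ((2 / 3) * (Real.pi + θ))) ^ 2)) ^ 2))
      ≤ ∫⁻ θ in Set.Ioc (Real.pi / 2) (2 * Real.pi),
          ∫⁻ _ρ in Set.Ioc (0 : ℝ) 1,
            D * ENNReal.ofReal (|Real.sin ((2 / 3) * (Real.pi + θ))| ^ e) := by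
        refine lintegral_mono fun θ => ?_
        refine setLIntegral_mono' measurableSet_Ioc fun ρ hρ => ?_
        exact pointwise_bound hpq f₀ hm θ hρ
    _ = ∫⁻ θ in Set.Ioc (Real.pi / 2) (2 * Real.pi),
          D * ENNReal.ofReal (|Real.sin ((2 / 3) * (Real.pi + θ))| ^ e) := by
        refine lintegral_congr fun θ => ?_
        rw [setLIntegral_const, Real.volume_Ioc]
        norm_num
    _ ≤ ∫⁻ θ in Set.Ioc (Real.pi / 2) (2 * Real.pi),
          D * ENNReal.ofReal (κ * ((θ - π / 2) ^ e + (2 * π - θ) ^ e)) := by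
        refine setLIntegral_mono' measurableSet_Ioc fun θ hθ => ?_
        refine mul_le_mul_right (ENNReal.ofReal_le_ofReal ?_) D
        exact sin_rpow_bound he0 hθ.1 hθ.2
    _ = D * ∫⁻ θ in Set.Ioc (Real.pi / 2) (2 * Real.pi),
          ENNReal.ofReal (κ * ((θ - π / 2) ^ e + (2 * π - θ) ^ e)) :=
        lintegral_const_mul' _ _ hD
    _ < ⊤ := by
        refine ENNReal.mul_lt_top hD.lt_top ?_
        exact ((theta_integrable he1).const_mul κ).lintegral_lt_top
end
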